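/- Chow–Kontsevich dilogarithm on ℙ¹: Let k be a field of characteristic p ≥ 5, k₂ = k[t]/(t²), and consider the triple of functions (1−z, z, z − s̃) on ℙ¹_{k₂} with coordinate z, where s̃ = s + a·s(1−s)·t, s ∈ k∖{0,1}, a ∈ k. Using the global lift to k[[t]] given by the same formulas, the sum over closed points c ∈ |ℙ¹| of ℓ^(p)(res_c((1−z) ∧ z ∧ (z − s̃))) equals a^p · £₁(s). Concretely: the residues at 0, 1, ∞ vanish, the residue at z = s̃ equals (1−s̃) ∧ s̃ ∈ Λ²(k[t]/(t^p))^×, and ℓ^(p)((1−s̃) ∧ s̃) = a^p·£₁(s) where £₁(s) = ∑_{1≤i≤p-1} s^i/i. -/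

import Mathlib

open Finset PowerSeries

variable (p : ℕ) {k : Type*} [Field k]

/-- Truncated logarithm `log(1+z) = ∑_{1 ≤ n < p} (-1)^{n+1} z^n / n`. -/
noncomputable def tlog (z : PowerSeries k) : PowerSeries k :=
  ∑ n ∈ Finset.Ico 1 p, ((-1 : k) ^ (n + 1) * (n : k)⁻¹) • z ^ n

/-- `ℓ_i(u)`: the `t^i`-coefficient of `log(u/u(0))`. -/
noncomputable def ell (i : ℕ) (u : PowerSeries k) : k :=
  PowerSeries.coeff (R := k) i
    (tlog p (PowerSeries.C (R := k) (PowerSeries.constantCoeff (R := k) u)⁻¹ * u - 1))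

/-- `ℓ^(p)(u ∧ v) = (1/2)∑_{1≤i<p} i·(ℓ_{p-i}(u)ℓ_i(v) − ℓ_{p-i}(v)ℓ_i(u))`. -/
noncomputable def ellp (u v : PowerSeries k) : k :=
  (2 : k)⁻¹ * ∑ i ∈ Finset.Ico 1 p,
    (i : k) * (ell p (p - i) u * ell p i v - ell p (p - i) v * ell p i u)

/-- Truncated exponential `ē^z = ∑_{0 ≤ n < p} z^n / n!`. -/
noncomputable def ee (z : PowerSeries k) : PowerSeries k :=
  ∑ n ∈ Finset.range p, ((n.factorial : k)⁻¹) • z ^ n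

/-- The Kontsevich 1½-logarithm `£₁(s) = ∑_{i=1}^{p-1} s^i / i`. -/
noncomputable def kontsevichLog (s : k) : k :=
  ∑ i ∈ Finset.Icc 1 (p - 1), (i : k)⁻¹ * s ^ i

/-! ### Auxiliary number-theoretic lemmas -/

/-- `Mc p i = (p choose i)/p`, an integer for `1 ≤ i ≤ p-1`. -/
def Mc (i : ℕ) : ℕ := p.choose i / p

lemma choose_eq_p_mul (hp : p.Prime) {i : ℕ} (h1 : 1 ≤ i) (h2 : i < p) :
    p.choose i = p * Mc p i :=
  (Nat.mul_div_cancel' (hp.dvd_choose_self (Nat.one_le_iff_ne_zero.mp h1) h2)).symm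

lemma i_mul_Mc (hp : p.Prime) {i : ℕ} (h1 : 1 ≤ i) (h2 : i < p) :
    i * Mc p i = (p - 1).choose (i - 1) := by
  have hp0 : 0 < p := hp.pos
  have key : p * ((p - 1).choose (i - 1)) = p * (i * Mc p i) := by
    have := Nat.add_one_mul_choose_eq (p - 1) (i - 1)
    have e1 : p - 1 + 1 = p := by omega
    have e2 : i - 1 + 1 = i := by omega
    simp only [Nat.succ_eq_add_one, e1, e2] at this
    rw [this, choose_eq_p_mul p hp h1 h2]; ring
  exact (Nat.eq_of_mul_eq_mul_left hp0 key).symm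

lemma choose_p_sub_one_cast (hp : p.Prime) [CharP k p] {j : ℕ} (hj : j < p) :
    (((p - 1).choose j : ℕ) : k) = (-1 : k) ^ j := by
  induction j with
  | zero => simp
  | succ n ih =>
    have hn : n < p := lt_trans (Nat.lt_succ_self n) hj
    have pascal : p.choose (n + 1) = (p - 1).choose n + (p - 1).choose (n + 1) := by
      have := Nat.choose_succ_succ (p - 1) n
      have e1 : p - 1 + 1 = p := by omega
      simp only [Nat.succ_eq_add_one, e1] at this
      exact this
    have hzero : ((p.choose (n + 1) : ℕ) : k) = 0 := by
      rw [choose_eq_p_mul p hp (Nat.succ_le_succ (Nat.zero_le n)) hj]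
      push_cast
      simp [CharP.cast_eq_zero k p]
    rw [pascal] at hzero
    push_cast at hzero
    have := ih hn
    rw [pow_succ]
    linear_combination hzero - this

lemma Mc_cast (hp : p.Prime) [CharP k p] {i : ℕ} (h1 : 1 ≤ i) (h2 : i < p) :
    ((Mc p i : ℕ) : k) = (-1 : k) ^ (i + 1) * (i : k)⁻¹ := by
  have hi0 : (i : k) ≠ 0 := by
    intro h
    rw [CharP.cast_eq_zero_iff k p] at h
    exact absurd (Nat.le_of_dvd (Nat.lt_of_lt_of_le Nat.zero_lt_one h1) h) (not_le.mpr h2)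
  have key : (i : k) * (Mc p i : k) = (-1 : k) ^ (i - 1) := by
    rw [← Nat.cast_mul, i_mul_Mc p hp h1 h2]
    exact choose_p_sub_one_cast p hp (by omega)
  have hpow : (-1 : k) ^ (i - 1) = (-1 : k) ^ (i + 1) := by
    have : i + 1 = (i - 1) + 2 := by omega
    rw [this, pow_add]; ring
  field_simp
  rw [mul_comm] at key
  rw [key, hpow]

/-! ### Reindexing and the key polynomial identity over `ℤ[X]` -/

lemma sum_Ico_reflect {M : Type*} [AddCommMonoid M] (f : ℕ → M) :
    ∑ i ∈ Ico 1 p, f (p - i) = ∑ i ∈ Ico 1 p, f i := by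
  apply Finset.sum_nbij' (fun i => p - i) (fun i => p - i) <;>
    intro a ha <;> simp only [mem_Ico] at * <;> omega

lemma binom_expand (hp : 0 < p) :
    ∑ i ∈ Ico 1 p, (p.choose i : Polynomial ℤ) * Polynomial.X ^ i *
        (1 - Polynomial.X) ^ (p - i) =
      1 - Polynomial.X ^ p - (1 - Polynomial.X) ^ p := by
  have h := add_pow (Polynomial.X : Polynomial ℤ) (1 - Polynomial.X) p
  rw [show (Polynomial.X : Polynomial ℤ) + (1 - Polynomial.X) = 1 by ring, one_pow] at h
  rw [Finset.range_eq_Ico, Finset.sum_Ico_succ_top (Nat.zero_le _),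
    Finset.sum_eq_sum_Ico_succ_bot hp] at h
  simp only [pow_zero, Nat.sub_zero, Nat.choose_zero_right, Nat.choose_self, Nat.sub_self,
    Nat.cast_one, one_mul, mul_one, zero_add] at h
  have e : ∑ i ∈ Ico 1 p, (p.choose i : Polynomial ℤ) * Polynomial.X ^ i *
        (1 - Polynomial.X) ^ (p - i) =
      ∑ i ∈ Ico 1 p, Polynomial.X ^ i * (1 - Polynomial.X) ^ (p - i) *
        (p.choose i : Polynomial ℤ) := by
    apply Finset.sum_congr rfl; intro i _; ring
  rw [e]
  linear_combination -h

lemma binom_sum_poly (hp : p.Prime) :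
    ∑ i ∈ Ico 1 p, (p.choose i : Polynomial ℤ) * Polynomial.X ^ (p - i) *
        (1 - Polynomial.X) ^ i =
      1 - Polynomial.X ^ p - (1 - Polynomial.X) ^ p := by
  have step : ∑ i ∈ Ico 1 p, (p.choose i : Polynomial ℤ) * Polynomial.X ^ (p - i) *
        (1 - Polynomial.X) ^ i =
      ∑ i ∈ Ico 1 p, (fun j => (p.choose j : Polynomial ℤ) * Polynomial.X ^ j *
        (1 - Polynomial.X) ^ (p - j)) (p - i) := by
    apply Finset.sum_congr rfl
    intro i hi
    simp only [mem_Ico] at hi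
    simp only []
    rw [Nat.choose_symm (by omega), Nat.sub_sub_self (by omega : i ≤ p)]
  have hrefl := sum_Ico_reflect p
    (fun j => (p.choose j : Polynomial ℤ) * Polynomial.X ^ j * (1 - Polynomial.X) ^ (p - j))
  rw [step, hrefl]
  exact binom_expand p hp.pos

lemma binom_expand_neg (hp : p.Prime) (hp2 : p ≠ 2) :
    ∑ i ∈ Ico 1 p, ((-1 : Polynomial ℤ) ^ (i + 1) * (p.choose i : Polynomial ℤ)) *
        Polynomial.X ^ i =
      1 - Polynomial.X ^ p - (1 - Polynomial.X) ^ p := by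
  have h := add_pow (-Polynomial.X : Polynomial ℤ) 1 p
  rw [Finset.range_eq_Ico, Finset.sum_Ico_succ_top (Nat.zero_le _),
    Finset.sum_eq_sum_Ico_succ_bot hp.pos] at h
  simp only [pow_zero, one_pow, Nat.choose_zero_right, Nat.choose_self, Nat.cast_one, one_mul,
    mul_one, zero_add] at h
  have hodd : Odd p := hp.odd_of_ne_two hp2
  have hXp : (-Polynomial.X : Polynomial ℤ) ^ p = -Polynomial.X ^ p := hodd.neg_pow _
  rw [hXp, show (-Polynomial.X : Polynomial ℤ) + 1 = 1 - Polynomial.X by ring] at h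
  have e : ∑ i ∈ Ico 1 p, ((-1 : Polynomial ℤ) ^ (i + 1) * (p.choose i : Polynomial ℤ)) *
        Polynomial.X ^ i =
      -∑ i ∈ Ico 1 p, (-Polynomial.X : Polynomial ℤ) ^ i * (p.choose i : Polynomial ℤ) := by
    rw [← Finset.sum_neg_distrib]
    apply Finset.sum_congr rfl; intro i _
    rw [neg_pow]; ring
  rw [e]
  linear_combination h

lemma key_poly (hp : p.Prime) (hp2 : p ≠ 2) :
    ∑ i ∈ Ico 1 p, (Mc p i : Polynomial ℤ) * Polynomial.X ^ (p - i) *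
        (1 - Polynomial.X) ^ i =
      ∑ i ∈ Ico 1 p, ((-1 : Polynomial ℤ) ^ (i + 1) * (Mc p i : Polynomial ℤ)) *
        Polynomial.X ^ i := by
  have hpne : ((p : ℕ) : Polynomial ℤ) ≠ 0 := Nat.cast_ne_zero.mpr hp.ne_zero
  apply mul_left_cancel₀ hpne
  rw [Finset.mul_sum, Finset.mul_sum]
  have l1 : ∀ i ∈ Ico 1 p, ((p : ℕ) : Polynomial ℤ) *
      ((Mc p i : Polynomial ℤ) * Polynomial.X ^ (p - i) * (1 - Polynomial.X) ^ i)
      = (p.choose i : Polynomial ℤ) * Polynomial.X ^ (p - i) * (1 - Polynomial.X) ^ i := by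
    intro i hi
    simp only [mem_Ico] at hi
    rw [choose_eq_p_mul p hp hi.1 hi.2]
    push_cast
    ring
  have l2 : ∀ i ∈ Ico 1 p, ((p : ℕ) : Polynomial ℤ) *
      (((-1 : Polynomial ℤ) ^ (i + 1) * (Mc p i : Polynomial ℤ)) * Polynomial.X ^ i)
      = ((-1 : Polynomial ℤ) ^ (i + 1) * (p.choose i : Polynomial ℤ)) * Polynomial.X ^ i := by
    intro i hi
    simp only [mem_Ico] at hi
    rw [choose_eq_p_mul p hp hi.1 hi.2]
    push_cast
    ring
  rw [Finset.sum_congr rfl l1, Finset.sum_congr rfl l2, binom_sum_poly p hp,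
    binom_expand_neg p hp hp2]

lemma key_ident (hp : p.Prime) (hp2 : p ≠ 2) (s : k) :
    ∑ i ∈ Ico 1 p, (Mc p i : k) * s ^ (p - i) * (1 - s) ^ i =
      ∑ i ∈ Ico 1 p, (-1 : k) ^ (i + 1) * (Mc p i : k) * s ^ i := by
  have h := congrArg (Polynomial.aeval s) (key_poly p hp hp2)
  simpa [map_sum, mul_assoc] using h

/-! ### Coefficients of the truncated logarithm -/

lemma tlog_coeff (b : k) {i : ℕ} (h1 : 1 ≤ i) (h2 : i < p) :
    PowerSeries.coeff (R := k) i (tlog p (PowerSeries.C (R := k) b * X)) =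
      (-1 : k) ^ (i + 1) * (i : k)⁻¹ * b ^ i := by
  unfold tlog
  rw [map_sum, Finset.sum_eq_single i]
  · simp [mul_pow, ← map_pow, coeff_C_mul, coeff_X_pow, mul_comm]
  · intro n _ hn
    simp [mul_pow, ← map_pow, coeff_C_mul, coeff_X_pow, (Ne.symm hn)]
  · intro h; exact absurd (Finset.mem_Ico.mpr ⟨h1, h2⟩) h

lemma ell_of (u : PowerSeries k) (b : k)
    (h : PowerSeries.C (R := k) (PowerSeries.constantCoeff (R := k) u)⁻¹ * u - 1 = PowerSeries.C (R := k) b * X)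
    {i : ℕ} (h1 : 1 ≤ i) (h2 : i < p) :
    ell p i u = (-1 : k) ^ (i + 1) * (i : k)⁻¹ * b ^ i := by
  unfold ell
  rw [h]
  exact tlog_coeff p b h1 h2

/-! ### The per-term algebraic identity -/

lemma term_eq (hp : p.Prime) (hp2 : p ≠ 2) [CharP k p] (s a : k) {i : ℕ}
    (h1 : 1 ≤ i) (h2 : i < p) :
    (i : k) * (((-1 : k) ^ (p - i + 1) * ((p - i : ℕ) : k)⁻¹ * (-(a * s)) ^ (p - i)) *
        ((-1 : k) ^ (i + 1) * (i : k)⁻¹ * (a * (1 - s)) ^ i) -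
      ((-1 : k) ^ (p - i + 1) * ((p - i : ℕ) : k)⁻¹ * (a * (1 - s)) ^ (p - i)) *
        ((-1 : k) ^ (i + 1) * (i : k)⁻¹ * (-(a * s)) ^ i)) =
      (-1 : k) ^ (i + 1) * (i : k)⁻¹ * a ^ p *
        (s ^ (p - i) * (1 - s) ^ i + s ^ i * (1 - s) ^ (p - i)) := by
  have hx : (i : k) ≠ 0 := by
    intro h
    rw [CharP.cast_eq_zero_iff k p] at h
    exact absurd (Nat.le_of_dvd (by omega) h) (not_le.mpr h2)
  have hpc : ((p - i : ℕ) : k) = -(i : k) := by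
    rw [Nat.cast_sub h2.le, CharP.cast_eq_zero k p]; ring
  have hodd : Odd p := hp.odd_of_ne_two hp2
  have hee : (-1 : k) ^ i * (-1 : k) ^ i = 1 := by
    rw [← pow_add]; exact Even.neg_one_pow ⟨i, rfl⟩
  have hsign : (-1 : k) ^ (p - i) * (-1 : k) ^ i = -1 := by
    rw [← pow_add, Nat.sub_add_cancel h2.le]; exact hodd.neg_one_pow
  have hE : (-1 : k) ^ (p - i) = -(-1 : k) ^ i := by
    calc (-1 : k) ^ (p - i) = ((-1 : k) ^ (p - i) * (-1 : k) ^ i) * (-1 : k) ^ i := by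
          rw [mul_assoc, hee, mul_one]
      _ = -(-1 : k) ^ i := by rw [hsign]; ring
  have hap : a ^ (p - i) * a ^ i = a ^ p := by rw [← pow_add, Nat.sub_add_cancel h2.le]
  rw [pow_succ, pow_succ, hE, hpc, neg_pow (a * s) (p - i), neg_pow (a * s) i, hE]
  simp only [mul_pow]
  rcases Nat.even_or_odd i with hi | hi
  · rw [hi.neg_one_pow]
    field_simp
    linear_combination (-((1 - s) ^ i * s ^ (p - i) + (1 - s) ^ (p - i) * s ^ i)) * hap
  · rw [hi.neg_one_pow]
    field_simp
    linear_combination (((1 - s) ^ i * s ^ (p - i) + (1 - s) ^ (p - i) * s ^ i)) * hap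

/-- Chow–Kontsevich dilogarithm on `ℙ¹`: for the triple `(1−z, z, z−s̃)` with
`s̃ = s + a·s(1−s)·t`, the residue of `(1−z) ∧ z ∧ (z−s̃)` at `z = s̃` is
`(1−s̃) ∧ s̃`, and its `ℓ^(p)`-value — the total contribution of the regulator,
the residues at `0, 1, ∞` vanishing — is `a^p·£₁(s)`. -/
theorem chow_kontsevich_on_P1 (hp : p.Prime) (hp5 : 5 ≤ p) [CharP k p]
    (s a : k) (hs0 : s ≠ 0) (hs1 : s ≠ 1) :
    ellp p (1 - (PowerSeries.C (R := k) s + PowerSeries.C (R := k) (a * s * (1 - s)) * X))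
        (PowerSeries.C (R := k) s + PowerSeries.C (R := k) (a * s * (1 - s)) * X) =
      a ^ p * kontsevichLog p s := by
  have hp2 : p ≠ 2 := by omega
  have hs1' : (1 : k) - s ≠ 0 := sub_ne_zero.mpr (Ne.symm hs1)
  -- the two series and their `ℓ` values
  have hveq : PowerSeries.C (R := k) (PowerSeries.constantCoeff (R := k)
        (PowerSeries.C (R := k) s + PowerSeries.C (R := k) (a * s * (1 - s)) * X))⁻¹ *
      (PowerSeries.C (R := k) s + PowerSeries.C (R := k) (a * s * (1 - s)) * X) - 1 =
      PowerSeries.C (R := k) (a * (1 - s)) * X := by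
    have h0 : PowerSeries.constantCoeff (R := k)
        (PowerSeries.C (R := k) s + PowerSeries.C (R := k) (a * s * (1 - s)) * X) = s := by simp
    rw [h0, mul_add, ← map_mul, inv_mul_cancel₀ hs0, map_one, ← mul_assoc, ← map_mul]
    rw [add_sub_cancel_left]
    have e : s⁻¹ * (a * s * (1 - s)) = a * (1 - s) := by field_simp
    rw [e]
  have hueq : PowerSeries.C (R := k) (PowerSeries.constantCoeff (R := k)
        (1 - (PowerSeries.C (R := k) s + PowerSeries.C (R := k) (a * s * (1 - s)) * X)))⁻¹ *
      (1 - (PowerSeries.C (R := k) s + PowerSeries.C (R := k) (a * s * (1 - s)) * X)) - 1 =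
      PowerSeries.C (R := k) (-(a * s)) * X := by
    have h0 : PowerSeries.constantCoeff (R := k)
        (1 - (PowerSeries.C (R := k) s + PowerSeries.C (R := k) (a * s * (1 - s)) * X)) = 1 - s := by simp
    have hrw : (1 : PowerSeries k) - (PowerSeries.C (R := k) s + PowerSeries.C (R := k) (a * s * (1 - s)) * X)
        = PowerSeries.C (R := k) (1 - s) + PowerSeries.C (R := k) (-(a * s * (1 - s))) * X := by
      rw [map_sub, map_neg, map_one]
      ring
    rw [h0, hrw, mul_add, ← map_mul, inv_mul_cancel₀ hs1', map_one, ← mul_assoc, ← map_mul]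
    rw [add_sub_cancel_left]
    have e : (1 - s)⁻¹ * -(a * s * (1 - s)) = -(a * s) := by field_simp
    rw [e]
  have hv : ∀ j : ℕ, 1 ≤ j → j < p →
      ell p j (PowerSeries.C (R := k) s + PowerSeries.C (R := k) (a * s * (1 - s)) * X) =
        (-1 : k) ^ (j + 1) * (j : k)⁻¹ * (a * (1 - s)) ^ j :=
    fun j hj1 hj2 => ell_of p _ _ hveq hj1 hj2
  have hu : ∀ j : ℕ, 1 ≤ j → j < p →
      ell p j (1 - (PowerSeries.C (R := k) s + PowerSeries.C (R := k) (a * s * (1 - s)) * X)) =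
        (-1 : k) ^ (j + 1) * (j : k)⁻¹ * (-(a * s)) ^ j :=
    fun j hj1 hj2 => ell_of p _ _ hueq hj1 hj2
  -- rewrite the sum
  unfold ellp
  have hsum : ∑ i ∈ Ico 1 p, (i : k) *
      (ell p (p - i) (1 - (PowerSeries.C (R := k) s + PowerSeries.C (R := k) (a * s * (1 - s)) * X)) *
          ell p i (PowerSeries.C (R := k) s + PowerSeries.C (R := k) (a * s * (1 - s)) * X) -
        ell p (p - i) (PowerSeries.C (R := k) s + PowerSeries.C (R := k) (a * s * (1 - s)) * X) *
          ell p i (1 - (PowerSeries.C (R := k) s + PowerSeries.C (R := k) (a * s * (1 - s)) * X))) =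
      ∑ i ∈ Ico 1 p, ((-1 : k) ^ (i + 1) * (i : k)⁻¹ * a ^ p * (s ^ (p - i) * (1 - s) ^ i)
        + (-1 : k) ^ (i + 1) * (i : k)⁻¹ * a ^ p * (s ^ i * (1 - s) ^ (p - i))) := by
    apply Finset.sum_congr rfl
    intro i hi
    simp only [mem_Ico] at hi
    obtain ⟨h1, h2⟩ := hi
    have h1' : 1 ≤ p - i := by omega
    have h2' : p - i < p := by omega
    rw [hu i h1 h2, hu (p - i) h1' h2', hv i h1 h2, hv (p - i) h1' h2']
    rw [term_eq p hp hp2 s a h1 h2]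
    ring
  rw [hsum, Finset.sum_add_distrib]
  -- the two halves are equal
  have hhalf : ∑ i ∈ Ico 1 p, (-1 : k) ^ (i + 1) * (i : k)⁻¹ * a ^ p *
        (s ^ i * (1 - s) ^ (p - i)) =
      ∑ i ∈ Ico 1 p, (-1 : k) ^ (i + 1) * (i : k)⁻¹ * a ^ p *
        (s ^ (p - i) * (1 - s) ^ i) := by
    have hstep : ∑ i ∈ Ico 1 p, (-1 : k) ^ (i + 1) * (i : k)⁻¹ * a ^ p *
        (s ^ (p - i) * (1 - s) ^ i) =
        ∑ i ∈ Ico 1 p, (fun j : ℕ => (-1 : k) ^ (j + 1) * (j : k)⁻¹ * a ^ p *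
          (s ^ j * (1 - s) ^ (p - j))) (p - i) := by
      apply Finset.sum_congr rfl
      intro i hi
      simp only [mem_Ico] at hi
      obtain ⟨h1, h2⟩ := hi
      simp only []
      have hpc : ((p - i : ℕ) : k) = -(i : k) := by
        rw [Nat.cast_sub h2.le, CharP.cast_eq_zero k p]; ring
      have hee : (-1 : k) ^ i * (-1 : k) ^ i = 1 := by
        rw [← pow_add]; exact Even.neg_one_pow ⟨i, rfl⟩
      have hsign : (-1 : k) ^ (p - i) * (-1 : k) ^ i = -1 := by
        rw [← pow_add, Nat.sub_add_cancel h2.le]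
        exact (hp.odd_of_ne_two hp2).neg_one_pow
      have hE : (-1 : k) ^ (p - i) = -(-1 : k) ^ i := by
        calc (-1 : k) ^ (p - i) = ((-1 : k) ^ (p - i) * (-1 : k) ^ i) * (-1 : k) ^ i := by
              rw [mul_assoc, hee, mul_one]
          _ = -(-1 : k) ^ i := by rw [hsign]; ring
      rw [Nat.sub_sub_self h2.le, pow_succ, pow_succ, hE, hpc]
      ring
    have hrefl := _root_.sum_Ico_reflect p
      (fun j : ℕ => (-1 : k) ^ (j + 1) * (j : k)⁻¹ * a ^ p * (s ^ j * (1 - s) ^ (p - j)))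
    rw [hstep, hrefl]
  rw [hhalf]
  -- evaluate the remaining sum via the key identity
  have hS : ∑ i ∈ Ico 1 p, (-1 : k) ^ (i + 1) * (i : k)⁻¹ * a ^ p *
      (s ^ (p - i) * (1 - s) ^ i) = a ^ p * kontsevichLog p s := by
    have e1 : ∑ i ∈ Ico 1 p, (-1 : k) ^ (i + 1) * (i : k)⁻¹ * a ^ p *
        (s ^ (p - i) * (1 - s) ^ i) =
        a ^ p * ∑ i ∈ Ico 1 p, (Mc p i : k) * s ^ (p - i) * (1 - s) ^ i := by
      rw [Finset.mul_sum]
      apply Finset.sum_congr rfl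
      intro i hi
      simp only [mem_Ico] at hi
      rw [Mc_cast p hp hi.1 hi.2]
      ring
    have e2 : ∑ i ∈ Ico 1 p, (-1 : k) ^ (i + 1) * (Mc p i : k) * s ^ i =
        kontsevichLog p s := by
      have hIcc : Finset.Icc 1 (p - 1) = Finset.Ico 1 p := by
        ext x
        simp only [mem_Icc, mem_Ico]
        omega
      unfold kontsevichLog
      rw [hIcc]
      apply Finset.sum_congr rfl
      intro i hi
      simp only [mem_Ico] at hi
      rw [Mc_cast p hp hi.1 hi.2]
      have hee : (-1 : k) ^ (i + 1) * (-1 : k) ^ (i + 1) = 1 := by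
        rw [← pow_add]; exact Even.neg_one_pow ⟨i + 1, rfl⟩
      calc (-1 : k) ^ (i + 1) * ((-1 : k) ^ (i + 1) * (i : k)⁻¹) * s ^ i
          = ((-1 : k) ^ (i + 1) * (-1 : k) ^ (i + 1)) * (i : k)⁻¹ * s ^ i := by ring
        _ = (i : k)⁻¹ * s ^ i := by rw [hee]; ring
    rw [e1, key_ident p hp hp2 s, e2]
  rw [hS]
  -- final arithmetic with 1/2
  have h2k : (2 : k) ≠ 0 := by
    intro h
    rw [show (2 : k) = ((2 : ℕ) : k) by norm_num, CharP.cast_eq_zero_iff k p] at h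
    have := Nat.le_of_dvd (by norm_num) h
    omega
  field_simp
  ring
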